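/- Let R_α and R_β be prime noetherian rings and let M be an (R_α, R_β)-bimodule that is finitely generated and torsionfree on each side (a bond). If m ∈ M is a nonzero normal element, i.e. R_α·m = m·R_β, then the left annihilator of m in R_α and the right annihilator of m in R_β are both zero. -/
import Mathlib


open MulOpposite

/-! ### Auxiliary development: in a prime left+right noetherian ring, every nonzero
two-sided ideal contains a regular element. -/

section GoldieAux

variable {R : Type*} [Ring R]

/-- The right annihilator of `x`, as a left ideal of `Rᵐᵒᵖ`. -/
private def rAnnS (x : R) : Submodule Rᵐᵒᵖ Rᵐᵒᵖ where
  carrier := {y : Rᵐᵒᵖ | x * y.unop = 0}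
  add_mem' := by
    intro a b ha hb
    simp only [Set.mem_setOf_eq, unop_add, mul_add] at *
    rw [ha, hb, add_zero]
  zero_mem' := by simp
  smul_mem' := by
    intro r y hy
    simp only [Set.mem_setOf_eq] at *
    show x * (r * y).unop = 0
    rw [unop_mul, ← mul_assoc, hy, zero_mul]

private lemma mem_rAnnS {x : R} {y : Rᵐᵒᵖ} : y ∈ rAnnS x ↔ x * y.unop = 0 := Iff.rfl

/-- The left annihilator of `x`, as a left ideal of `R`. -/
private def lAnnS (x : R) : Submodule R R where
  carrier := {y : R | y * x = 0}
  add_mem' := by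
    intro a b ha hb
    simp only [Set.mem_setOf_eq, add_mul] at *
    rw [ha, hb, add_zero]
  zero_mem' := by simp
  smul_mem' := by
    intro r y hy
    simp only [Set.mem_setOf_eq, smul_eq_mul] at *
    rw [mul_assoc, hy, mul_zero]

private lemma mem_lAnnS {x y : R} : y ∈ lAnnS x ↔ y * x = 0 := Iff.rfl

/-- The left annihilator of the right annihilator of `c`, as a left ideal of `R`. -/
private def cAnnS (c : R) : Submodule R R where
  carrier := {y : R | ∀ z : R, c * z = 0 → y * z = 0}
  add_mem' := by
    intro a b ha hb z hz
    rw [add_mul, ha z hz, hb z hz, add_zero]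
  zero_mem' := by
    intro z _
    rw [zero_mul]
  smul_mem' := by
    intro r y hy z hz
    show r * y * z = 0
    rw [mul_assoc, hy z hz, mul_zero]

private lemma mem_cAnnS {c y : R} : y ∈ cAnnS c ↔ ∀ z : R, c * z = 0 → y * z = 0 := Iff.rfl

/-- Maximal choice principle for a family of submodules, from noetherianity. -/
private lemma exists_max {R' M' : Type*} [Ring R'] [AddCommGroup M'] [Module R' M']
    (h : IsNoetherian R' M') {α : Type*} (F : α → Submodule R' M') (s : Set α)
    (hs : s.Nonempty) : ∃ a ∈ s, ∀ b ∈ s, F a ≤ F b → F b = F a := by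
  obtain ⟨A, hA, hmax⟩ := set_has_maximal_iff_noetherian.mpr h (F '' s) (hs.image F)
  obtain ⟨a, ha, rfl⟩ := hA
  refine ⟨a, ha, fun b hb hle => ?_⟩
  by_contra hne
  exact hmax (F b) ⟨b, hb, rfl⟩ (lt_of_le_of_ne hle fun h' => hne h'.symm)

/-- Maximal choice for right annihilators. -/
private lemma max_rAnn (hop : IsNoetherianRing Rᵐᵒᵖ) {s : Set R} (hs : s.Nonempty) :
    ∃ a ∈ s, ∀ b ∈ s, (∀ y : R, a * y = 0 → b * y = 0) →
      ∀ y : R, b * y = 0 → a * y = 0 := by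
  obtain ⟨a, ha, hmax⟩ := exists_max hop (rAnnS (R := R)) s hs
  refine ⟨a, ha, fun b hb hle y hy => ?_⟩
  have h1 : rAnnS a ≤ rAnnS b := by
    intro z hz
    exact hle z.unop hz
  have h2 : rAnnS b = rAnnS a := hmax b hb h1
  have : (op y : Rᵐᵒᵖ) ∈ rAnnS b := by
    rw [mem_rAnnS, unop_op]
    exact hy
  rw [h2, mem_rAnnS, unop_op] at this
  exact this

/-- Maximal choice for left annihilators. -/
private lemma max_lAnn (hno : IsNoetherianRing R) {s : Set R} (hs : s.Nonempty) :
    ∃ a ∈ s, ∀ b ∈ s, (∀ y : R, y * a = 0 → y * b = 0) →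
      ∀ y : R, y * b = 0 → y * a = 0 := by
  obtain ⟨a, ha, hmax⟩ := exists_max hno (lAnnS (R := R)) s hs
  refine ⟨a, ha, fun b hb hle y hy => ?_⟩
  have h1 : lAnnS a ≤ lAnnS b := fun z hz => hle z hz
  have h2 : lAnnS b = lAnnS a := hmax b hb h1
  have : y ∈ lAnnS b := hy
  rw [h2] at this
  exact this

/-- Levitzki-type lemma: a left-multiplication-closed set of nilpotent elements in a
prime ring with ACC on right annihilators is zero. -/
private lemma nil_left (hp : ∀ a b : R, (∀ x : R, a * x * b = 0) → a = 0 ∨ b = 0)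
    (hop : IsNoetherianRing Rᵐᵒᵖ) (S : Set R)
    (hmul : ∀ (r : R), ∀ x ∈ S, r * x ∈ S)
    (hnil : ∀ x ∈ S, ∃ n : ℕ, x ^ (n + 1) = 0) :
    ∀ x ∈ S, x = 0 := by
  classical
  by_contra h
  push_neg at h
  obtain ⟨x0, hx0S, hx0⟩ := h
  obtain ⟨a, ⟨haS, ha0⟩, hamax⟩ :=
    max_rAnn hop (s := {x | x ∈ S ∧ x ≠ 0}) ⟨x0, hx0S, hx0⟩
  have key : ∀ x : R, a * x * a = 0 := by
    intro x
    by_cases hxa : x * a = 0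
    · rw [mul_assoc, hxa, mul_zero]
    · have hxaS : x * a ∈ S := hmul x a haS
      have hex : ∃ k : ℕ, (x * a) ^ (k + 1) = 0 := hnil _ hxaS
      set k := Nat.find hex with hkdef
      have hk0 : (x * a) ^ (k + 1) = 0 := Nat.find_spec hex
      have hkne : k ≠ 0 := by
        intro h0
        apply hxa
        have := hk0
        rw [h0, pow_one] at this
        exact this
      obtain ⟨j, hj⟩ := Nat.exists_eq_succ_of_ne_zero hkne
      have hknz : (x * a) ^ k ≠ 0 := by
        have := Nat.find_min hex (m := j) (by omega)
        rw [hj]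
        exact this
      have hpS : (x * a) ^ k ∈ S := by
        have heq : (x * a) ^ k = ((x * a) ^ j * x) * a := by
          rw [hj, pow_succ, mul_assoc]
        rw [heq]
        exact hmul _ a haS
      have hsub : ∀ y : R, a * y = 0 → (x * a) ^ k * y = 0 := by
        intro y hy
        rw [hj, pow_succ, mul_assoc _ (x * a) y, mul_assoc x a y, hy, mul_zero, mul_zero]
      have hback := hamax ((x * a) ^ k) ⟨hpS, hknz⟩ hsub
      have hlast : (x * a) ^ k * (x * a) = 0 := by
        rw [← pow_succ]
        exact hk0
      have hxa0 : a * (x * a) = 0 := hback _ hlast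
      rw [← mul_assoc] at hxa0
      exact hxa0
  rcases hp a a key with h' | h' <;> exact absurd h' ha0

/-- Mirror of `nil_left`: a right-multiplication-closed set of nilpotent elements in a
prime ring with ACC on left annihilators is zero. -/
private lemma nil_right (hp : ∀ a b : R, (∀ x : R, a * x * b = 0) → a = 0 ∨ b = 0)
    (hno : IsNoetherianRing R) (S : Set R)
    (hmul : ∀ x ∈ S, ∀ (r : R), x * r ∈ S)
    (hnil : ∀ x ∈ S, ∃ n : ℕ, x ^ (n + 1) = 0) :
    ∀ x ∈ S, x = 0 := by
  classical
  by_contra h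
  push_neg at h
  obtain ⟨x0, hx0S, hx0⟩ := h
  obtain ⟨a, ⟨haS, ha0⟩, hamax⟩ :=
    max_lAnn hno (s := {x | x ∈ S ∧ x ≠ 0}) ⟨x0, hx0S, hx0⟩
  have key : ∀ x : R, a * x * a = 0 := by
    intro x
    by_cases hax : a * x = 0
    · rw [hax, zero_mul]
    · have haxS : a * x ∈ S := hmul a haS x
      have hex : ∃ k : ℕ, (a * x) ^ (k + 1) = 0 := hnil _ haxS
      set k := Nat.find hex with hkdef
      have hk0 : (a * x) ^ (k + 1) = 0 := Nat.find_spec hex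
      have hkne : k ≠ 0 := by
        intro h0
        apply hax
        have := hk0
        rw [h0, pow_one] at this
        exact this
      obtain ⟨j, hj⟩ := Nat.exists_eq_succ_of_ne_zero hkne
      have hknz : (a * x) ^ k ≠ 0 := by
        have := Nat.find_min hex (m := j) (by omega)
        rw [hj]
        exact this
      have hpS : (a * x) ^ k ∈ S := by
        have heq : (a * x) ^ k = a * (x * (a * x) ^ j) := by
          rw [hj, pow_succ', ← mul_assoc]
        rw [heq]
        exact hmul a haS _
      have hsub : ∀ y : R, y * a = 0 → y * (a * x) ^ k = 0 := by
        intro y hy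
        rw [hj, pow_succ', ← mul_assoc, ← mul_assoc, hy, zero_mul, zero_mul]
      have hback := hamax ((a * x) ^ k) ⟨hpS, hknz⟩ hsub
      have hlast : (a * x) * (a * x) ^ k = 0 := by
        rw [← pow_succ']
        exact hk0
      have hxa0 : (a * x) * a = 0 := hback _ hlast
      rw [mul_assoc] at hxa0
      rw [mul_assoc]
      exact hxa0
  rcases hp a a key with h' | h' <;> exact absurd h' ha0

/-- Essentiality of a subset as a right ideal, expressed elementwise. -/
private def Ess (E : Set R) : Prop :=
  ∀ t : R, t ≠ 0 → ∃ r : R, t * r ∈ E ∧ t * r ≠ 0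

private lemma ess_mono {E F : Set R} (h : E ⊆ F) (he : Ess E) : Ess F := by
  intro t ht
  obtain ⟨r, h1, h2⟩ := he t ht
  exact ⟨r, h h1, h2⟩

/-- The (left-) singular ideal vanishes: if the right annihilator of `x` is essential,
then `x = 0` (in a prime, left+right noetherian ring). -/
private lemma singular_zero (hp : ∀ a b : R, (∀ x : R, a * x * b = 0) → a = 0 ∨ b = 0)
    (hop : IsNoetherianRing Rᵐᵒᵖ) :
    ∀ x : R, Ess {y : R | x * y = 0} → x = 0 := by
  set S : Set R := {x | Ess {y : R | x * y = 0}} with hS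
  have hmul : ∀ (r : R), ∀ x ∈ S, r * x ∈ S := by
    intro r x hx
    refine ess_mono (fun y hy => ?_) hx
    simp only [Set.mem_setOf_eq] at *
    rw [mul_assoc, hy, mul_zero]
  have hnil : ∀ x ∈ S, ∃ n : ℕ, x ^ (n + 1) = 0 := by
    intro x hx
    obtain ⟨a, ⟨n, hn⟩, hmax⟩ :=
      max_rAnn hop (s := Set.range fun n : ℕ => x ^ (n + 1)) ⟨x ^ 1, 0, rfl⟩
    subst hn
    have hsub : ∀ y : R, x ^ (n + 1) * y = 0 → x ^ (n + 1 + 1) * y = 0 := by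
      intro y hy
      rw [pow_succ', mul_assoc, hy, mul_zero]
    have hback := hmax (x ^ (n + 1 + 1)) ⟨n + 1, rfl⟩ hsub
    refine ⟨n, ?_⟩
    by_contra hne
    obtain ⟨r, hr1, hr2⟩ := hx (x ^ (n + 1)) hne
    simp only [Set.mem_setOf_eq] at hr1
    have h2 : x ^ (n + 1 + 1) * r = 0 := by
      rw [pow_succ', mul_assoc]
      exact hr1
    exact hr2 (hback r h2)
  exact nil_left hp hop S hmul hnil

/-- Power trick: any right-ideal-like set with a nonzero element contains a nonzero
element `b` with `rAnn(b) ∩ bR = 0`. -/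
private lemma lemB (hp : ∀ a b : R, (∀ x : R, a * x * b = 0) → a = 0 ∨ b = 0)
    (hno : IsNoetherianRing R) (hop : IsNoetherianRing Rᵐᵒᵖ) (T : Set R)
    (hmul : ∀ t ∈ T, ∀ r : R, t * r ∈ T) (hne : ∃ t ∈ T, t ≠ 0) :
    ∃ b ∈ T, b ≠ 0 ∧ ∀ x : R, b * (b * x) = 0 → b * x = 0 := by
  have hexa : ∃ a ∈ T, ∀ n : ℕ, a ^ (n + 1) ≠ 0 := by
    by_contra h
    push_neg at h
    obtain ⟨t, ht, ht0⟩ := hne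
    exact ht0 (nil_right hp hno T hmul h t ht)
  obtain ⟨a, haT, ha⟩ := hexa
  obtain ⟨b, ⟨n, hn⟩, hmax⟩ :=
    max_rAnn hop (s := Set.range fun n : ℕ => a ^ (n + 1)) ⟨a ^ 1, 0, rfl⟩
  subst hn
  refine ⟨a ^ (n + 1), ?_, ha n, ?_⟩
  · have heq : a ^ (n + 1) = a * a ^ n := pow_succ' a n
    rw [heq]
    exact hmul a haT (a ^ n)
  · intro x hx
    have h2 : a ^ (n + 1 + (n + 1)) * x = 0 := by
      rw [pow_add, mul_assoc]
      exact hx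
    have hsub : ∀ y : R, a ^ (n + 1) * y = 0 → a ^ (n + 1 + (n + 1)) * y = 0 := by
      intro y hy
      rw [pow_add, mul_assoc, hy, mul_zero]
    have hmem : a ^ (n + 1 + (n + 1)) ∈ Set.range fun n : ℕ => a ^ (n + 1) :=
      ⟨n + (n + 1), by
        show a ^ (n + (n + 1) + 1) = a ^ (n + 1 + (n + 1))
        rw [show n + (n + 1) + 1 = n + 1 + (n + 1) by omega]⟩
    exact hmax _ hmem hsub x h2

/-- A nonzero two-sided ideal of a prime ring is (elementwise) essential as a right
ideal. -/
private lemma ess_ideal (hp : ∀ a b : R, (∀ x : R, a * x * b = 0) → a = 0 ∨ b = 0)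
    (I : Set R) (hL : ∀ (r : R), ∀ a ∈ I, r * a ∈ I)
    (hne : ∃ a ∈ I, a ≠ 0) : Ess I := by
  intro t ht
  by_contra h
  push_neg at h
  obtain ⟨a, haI, ha0⟩ := hne
  have hall : ∀ x : R, t * x * a = 0 := by
    intro x
    have h1 : t * (x * a) ∈ I := hL t _ (hL x a haI)
    have h2 := h (x * a) h1
    rwa [← mul_assoc] at h2
  rcases hp t a hall with h' | h'
  exacts [ht h', ha0 h']

/-- If `c` has zero right annihilator, then `cR` is an essential right ideal
(ascending-chain trick, no uniform dimension needed). -/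
private lemma cR_ess (hop : IsNoetherianRing Rᵐᵒᵖ) (c : R)
    (hc : ∀ x : R, c * x = 0 → x = 0) : Ess {y : R | ∃ s : R, y = c * s} := by
  intro t ht
  by_contra h
  push_neg at h
  -- h : ∀ r, t * r ∈ cR → t * r = 0
  -- define the chain Uₙ = tR + ctR + ... + cⁿtR
  let U : ℕ → Submodule Rᵐᵒᵖ Rᵐᵒᵖ := fun n =>
    { carrier := {y : Rᵐᵒᵖ | ∃ f : ℕ → R,
        y.unop = ∑ k ∈ Finset.range (n + 1), c ^ k * t * f k}
      add_mem' := by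
        rintro a b ⟨f, hf⟩ ⟨g, hg⟩
        refine ⟨f + g, ?_⟩
        rw [unop_add, hf, hg, ← Finset.sum_add_distrib]
        refine Finset.sum_congr rfl fun k _ => ?_
        rw [Pi.add_apply, mul_add]
      zero_mem' := ⟨0, by simp⟩
      smul_mem' := by
        rintro r y ⟨f, hf⟩
        refine ⟨fun k => f k * r.unop, ?_⟩
        show (r * y).unop = _
        rw [unop_mul, hf, Finset.sum_mul]
        refine Finset.sum_congr rfl fun k _ => ?_
        rw [mul_assoc] }
  -- independence
  have ind : ∀ (n : ℕ) (f : ℕ → R),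
      (∑ k ∈ Finset.range (n + 1), c ^ k * t * f k) = 0 → ∀ k ≤ n, t * f k = 0 := by
    intro n
    induction n with
    | zero =>
      intro f hf k hk
      interval_cases k
      simpa using hf
    | succ n ih =>
      intro f hf k hk
      rw [Finset.sum_range_succ'] at hf
      -- hf : (∑ k ∈ range (n+1), c^(k+1) * t * f (k+1)) + c^0 * t * f 0 = 0
      have hre : (∑ k ∈ Finset.range (n + 1), c ^ (k + 1) * t * f (k + 1)) =
          c * ∑ k ∈ Finset.range (n + 1), c ^ k * t * f (k + 1) := by
        rw [Finset.mul_sum]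
        refine Finset.sum_congr rfl fun k _ => ?_
        rw [pow_succ', mul_assoc, mul_assoc, mul_assoc]
      rw [hre] at hf
      simp only [pow_zero, one_mul] at hf
      have htf0 : t * f 0 = 0 := by
        apply h
        refine ⟨-(∑ k ∈ Finset.range (n + 1), c ^ k * t * f (k + 1)), ?_⟩
        rw [mul_neg]
        exact eq_neg_of_add_eq_zero_right hf
      have hcs : c * (∑ k ∈ Finset.range (n + 1), c ^ k * t * f (k + 1)) = 0 := by
        rw [htf0, add_zero] at hf
        exact hf
      have hs0 := hc _ hcs
      have hrec := ih (fun k => f (k + 1)) hs0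
      rcases Nat.eq_zero_or_pos k with hk0 | hkpos
      · rw [hk0]; exact htf0
      · obtain ⟨j, rfl⟩ := Nat.exists_eq_succ_of_ne_zero hkpos.ne'
        exact hrec j (by omega)
  -- monotone
  have hmono : ∀ n, U n ≤ U (n + 1) := by
    intro n
    refine SetLike.le_def.mpr ?_
    rintro y ⟨f, hf⟩
    refine ⟨fun k => if k ≤ n then f k else 0, ?_⟩
    rw [Finset.sum_range_succ]
    simp only [show ¬(n + 1 ≤ n) by omega, if_false, mul_zero, add_zero]
    rw [hf]
    refine Finset.sum_congr rfl fun k hk => ?_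
    rw [if_pos (by simp at hk; omega)]
  -- strictness
  have hstrict : ∀ n, U n ≠ U (n + 1) := by
    intro n heq
    have hmem : (op (c ^ (n + 1) * t) : Rᵐᵒᵖ) ∈ U (n + 1) := by
      refine ⟨fun k => if k = n + 1 then 1 else 0, ?_⟩
      rw [unop_op, Finset.sum_range_succ]
      beta_reduce
      rw [Finset.sum_eq_zero (fun k hk => by
        rw [if_neg (by simp only [Finset.mem_range] at hk; omega), mul_zero])]
      rw [zero_add, if_pos rfl, mul_one]
    rw [← heq] at hmem
    obtain ⟨f, hf⟩ := hmem
    rw [unop_op] at hf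
    -- c^(n+1) * t = ∑_{k ≤ n} c^k t f k ; build a relation of length n+2
    have hzero : (∑ k ∈ Finset.range (n + 1 + 1),
        c ^ k * t * (fun k => if k = n + 1 then (-1 : R) else f k) k) = 0 := by
      rw [Finset.sum_range_succ]
      beta_reduce
      rw [Finset.sum_congr rfl (fun k hk => by
        rw [if_neg (by simp only [Finset.mem_range] at hk; omega)])]
      rw [← hf, if_pos rfl, mul_neg, mul_one, add_neg_cancel]
    have := ind (n + 1) _ hzero (n + 1) le_rfl
    beta_reduce at this
    rw [if_pos rfl, mul_neg, mul_one, neg_eq_zero] at this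
    exact ht this
  obtain ⟨n, hn⟩ := monotone_stabilizes_iff_noetherian.mpr hop
    ⟨U, monotone_nat_of_le_succ hmono⟩
  exact hstrict n (hn (n + 1) (by omega))

/-- **Key lemma**: a nonzero two-sided ideal of a prime left+right noetherian ring
contains an element that is regular on both sides. -/
private lemma key (hno : IsNoetherianRing R) (hop : IsNoetherianRing Rᵐᵒᵖ)
    (hp : ∀ a b : R, (∀ x : R, a * x * b = 0) → a = 0 ∨ b = 0)
    (I : Set R)
    (hadd : ∀ a ∈ I, ∀ b ∈ I, a + b ∈ I)
    (hL : ∀ (r : R), ∀ a ∈ I, r * a ∈ I)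
    (hR : ∀ a ∈ I, ∀ (r : R), a * r ∈ I)
    (hne : ∃ a ∈ I, a ≠ 0) :
    ∃ c ∈ I, (∀ x : R, c * x = 0 → x = 0) ∧ (∀ x : R, x * c = 0 → x = 0) := by
  have hIess : Ess I := ess_ideal hp I hL hne
  set G : Set R := {c | c ∈ I ∧ c ≠ 0 ∧ ∀ x : R, c * (c * x) = 0 → c * x = 0} with hG
  have hGne : G.Nonempty := by
    obtain ⟨b, hbI, hb0, hbQ⟩ := lemB hp hno hop I hR hne
    exact ⟨b, hbI, hb0, hbQ⟩
  obtain ⟨c, hcG, hcmax⟩ := exists_max hno (cAnnS (R := R)) G hGne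
  have hrc : ∀ x : R, c * x = 0 → x = 0 := by
    by_contra h
    push_neg at h
    obtain ⟨x0, hx0c, hx00⟩ := h
    obtain ⟨r0, hr0I, hr00⟩ := hIess x0 hx00
    have hr0ann : c * (x0 * r0) = 0 := by rw [← mul_assoc, hx0c, zero_mul]
    set T : Set R := {u | u ∈ I ∧ c * u = 0} with hT
    have hTmul : ∀ u ∈ T, ∀ r : R, u * r ∈ T := by
      intro u hu r
      exact ⟨hR u hu.1 r, by rw [← mul_assoc, hu.2, zero_mul]⟩
    obtain ⟨d, ⟨hdI, hdc⟩, hd0, hdQ⟩ :=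
      lemB hp hno hop T hTmul ⟨x0 * r0, ⟨hr0I, hr0ann⟩, hr00⟩
    have hcQ := hcG.2.2
    have hsplit : ∀ x : R, (c + d) * x = 0 → c * x = 0 ∧ d * x = 0 := by
      intro x hx
      rw [add_mul] at hx
      have h1 : c * (c * x) + c * (d * x) = 0 := by rw [← mul_add, hx, mul_zero]
      have h2 : c * (d * x) = 0 := by rw [← mul_assoc, hdc, zero_mul]
      have h3 : c * (c * x) = 0 := by rwa [h2, add_zero] at h1
      have h4 : c * x = 0 := hcQ x h3
      have h5 : d * x = 0 := by rwa [h4, zero_add] at hx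
      exact ⟨h4, h5⟩
    have hQ' : ∀ x : R, (c + d) * ((c + d) * x) = 0 → (c + d) * x = 0 := by
      intro x hx
      obtain ⟨h1, h2⟩ := hsplit _ hx
      rw [add_mul] at h1 h2 ⊢
      have h3 : c * (c * x) + c * (d * x) = 0 := by rw [← mul_add]; exact h1
      have h4 : c * (d * x) = 0 := by rw [← mul_assoc, hdc, zero_mul]
      have h5 : c * (c * x) = 0 := by rwa [h4, add_zero] at h3
      have h6 : c * x = 0 := hcQ x h5
      have h7 : d * (d * x) = 0 := by
        rw [mul_add, h6, mul_zero, zero_add] at h2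
        exact h2
      have h8 : d * x = 0 := hdQ x h7
      rw [h6, h8, add_zero]
    have hd2 : d * d ≠ 0 := by
      intro hdd
      have := hdQ 1 (by rw [mul_one]; exact hdd)
      rw [mul_one] at this
      exact hd0 this
    have hne' : c + d ≠ 0 := by
      intro h0
      have : (c + d) * d = 0 := by rw [h0, zero_mul]
      rw [add_mul, hdc, zero_add] at this
      exact hd2 this
    have hG' : (c + d) ∈ G := ⟨hadd c hcG.1 d hdI, hne', hQ'⟩
    have hle : cAnnS c ≤ cAnnS (c + d) := by
      intro y hy
      rw [mem_cAnnS] at hy ⊢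
      intro z hz
      exact hy z (hsplit z hz).1
    have heq := hcmax _ hG' hle
    have hself : (c + d) ∈ cAnnS (c + d) := by
      rw [mem_cAnnS]
      intro z hz
      exact hz
    rw [heq, mem_cAnnS] at hself
    have := hself d hdc
    rw [add_mul, hdc, zero_add] at this
    exact hd2 this
  have hlc : ∀ x : R, x * c = 0 → x = 0 := by
    intro x hx
    apply singular_zero hp hop x
    refine ess_mono (F := {y : R | x * y = 0}) ?_ (cR_ess hop c hrc)
    rintro y ⟨s, rfl⟩
    show x * (c * s) = 0
    rw [← mul_assoc, hx, zero_mul]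
  exact ⟨c, hcG.1, hrc, hlc⟩

end GoldieAux

/-- if `M` is a bond (finitely generated torsionfree bimodule on each side)
between prime noetherian rings `Rα` and `Rβ`, and `m ∈ M` is a nonzero normal element
(`Rα·m = m·Rβ`), then the left annihilator of `m` in `Rα` and the right annihilator of `m`
in `Rβ` are both zero. -/
theorem bond_normal_element_annihilators {Rα Rβ M : Type*} [Ring Rα] [Ring Rβ]
    [AddCommGroup M] [Module Rα M] [Module Rβᵐᵒᵖ M] [SMulCommClass Rα Rβᵐᵒᵖ M]
    -- `Rα` and `Rβ` are left and right noetherian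
    (hnoeth : IsNoetherianRing Rα ∧ IsNoetherianRing Rαᵐᵒᵖ ∧
      IsNoetherianRing Rβ ∧ IsNoetherianRing Rβᵐᵒᵖ)
    -- `Rα` and `Rβ` are prime rings
    (hprimeα : ∀ a b : Rα, (∀ x : Rα, a * x * b = 0) → a = 0 ∨ b = 0)
    (hprimeβ : ∀ a b : Rβ, (∀ x : Rβ, a * x * b = 0) → a = 0 ∨ b = 0)
    -- `M` is finitely generated on each side
    (hfgL : Module.Finite Rα M) (hfgR : Module.Finite Rβᵐᵒᵖ M)
    -- `M` is torsionfree on each side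
    (htfL : ∀ r : Rα, ((∀ x : Rα, r * x = 0 → x = 0) ∧ (∀ x : Rα, x * r = 0 → x = 0)) →
      ∀ v : M, r • v = 0 → v = 0)
    (htfR : ∀ s : Rβ, ((∀ x : Rβ, s * x = 0 → x = 0) ∧ (∀ x : Rβ, x * s = 0 → x = 0)) →
      ∀ v : M, (op s) • v = 0 → v = 0)
    -- `m` is a nonzero normal element: `Rα·m = m·Rβ`
    (m : M) (hm : m ≠ 0)
    (hnormal : {x : M | ∃ r : Rα, r • m = x} = {x : M | ∃ s : Rβ, (op s) • m = x}) :
    (∀ r : Rα, r • m = 0 → r = 0) ∧ (∀ s : Rβ, (op s) • m = 0 → s = 0) := by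
  constructor
  · intro r hr
    by_contra hr0
    set I : Set Rα := {x | x • m = 0} with hI
    have hadd : ∀ a ∈ I, ∀ b ∈ I, a + b ∈ I := by
      intro a ha b hb
      show (a + b) • m = 0
      rw [add_smul, ha, hb, add_zero]
    have hL : ∀ (x : Rα), ∀ a ∈ I, x * a ∈ I := by
      intro x a ha
      show (x * a) • m = 0
      rw [mul_smul, ha, smul_zero]
    have hR : ∀ a ∈ I, ∀ (x : Rα), a * x ∈ I := by
      intro a ha x
      show (a * x) • m = 0
      have hx : x • m ∈ {y : M | ∃ r : Rα, r • m = y} := ⟨x, rfl⟩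
      rw [hnormal] at hx
      obtain ⟨s, hs⟩ := hx
      rw [mul_smul, ← hs, smul_comm, ha, smul_zero]
    obtain ⟨c, hcI, hc1, hc2⟩ :=
      key hnoeth.1 hnoeth.2.1 hprimeα I hadd hL hR ⟨r, hr, hr0⟩
    exact hm (htfL c ⟨hc1, hc2⟩ m hcI)
  · intro s hs
    by_contra hs0
    set J : Set Rβ := {x | (op x) • m = 0} with hJ
    have hadd : ∀ a ∈ J, ∀ b ∈ J, a + b ∈ J := by
      intro a ha b hb
      show (op (a + b)) • m = 0
      rw [op_add, add_smul, ha, hb, add_zero]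
    have hL : ∀ (x : Rβ), ∀ a ∈ J, x * a ∈ J := by
      intro x a ha
      show (op (x * a)) • m = 0
      have hx : (op x) • m ∈ {y : M | ∃ s' : Rβ, (op s') • m = y} := ⟨x, rfl⟩
      rw [← hnormal] at hx
      obtain ⟨r', hr'⟩ := hx
      rw [op_mul, mul_smul, ← hr', ← smul_comm r' (op a) m, ha, smul_zero]
    have hR : ∀ a ∈ J, ∀ (x : Rβ), a * x ∈ J := by
      intro a ha x
      show (op (a * x)) • m = 0
      rw [op_mul, mul_smul, ha, smul_zero]
    obtain ⟨c, hcJ, hc1, hc2⟩ :=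
      key hnoeth.2.2.1 hnoeth.2.2.2 hprimeβ J hadd hL hR ⟨s, hs, hs0⟩
    exact hm (htfR c ⟨hc1, hc2⟩ m hcJ)
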